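/- Let k be ℤ or a field, and consider ℤ×ℤ/2-graded chain complexes of free k-modules with differential of bidegree (2, 1̄). Every bounded such complex with free finitely generated terms is isomorphic to a direct sum of complexes of two types: (a) a single copy of k in some bidegree with zero differential, and (b) a two-term complex k⟨a⟩Π^b → k⟨a+2⟩Π^{b+1} with differential given by multiplication by a nonzero scalar d ∈ k. Consequently the Grothendieck group of the homotopy category of such complexes (modulo contractible ones) is ℤ[q,q⁻¹,π]/(π²−1, 1+q²π). -/

import Mathlib

open Submodule

section Aux

variable {k V : Type*} [Field k] [AddCommGroup V] [Module k V]

lemma hgcd_cons_indep {n : ℕ} (B : Submodule k V) (W : Fin n → Submodule k V)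
    (hW : iSupIndep W) (hd : Disjoint B (⨆ i, W i)) : iSupIndep (Fin.cons B W) := by
  intro i
  induction i using Fin.cases with
  | zero =>
    rw [Fin.cons_zero]
    refine hd.mono_right (iSup₂_le fun j hj => ?_)
    obtain ⟨j', rfl⟩ := Fin.exists_succ_eq_of_ne_zero hj
    rw [Fin.cons_succ]
    exact le_iSup W j'
  | succ m =>
    rw [Fin.cons_succ]
    have h2 : (⨆ j, ⨆ (_ : j ≠ m.succ), Fin.cons B W j) ≤ (⨆ j, ⨆ (_ : j ≠ m), W j) ⊔ B := by
      refine iSup₂_le fun j hj => ?_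
      rcases eq_or_ne j 0 with rfl | hj0
      · rw [Fin.cons_zero]; exact le_sup_right
      · obtain ⟨j', rfl⟩ := Fin.exists_succ_eq_of_ne_zero hj0
        have hj' : j' ≠ m := fun h => hj (by rw [h])
        rw [Fin.cons_succ]
        exact le_sup_of_le_left (le_iSup₂ (f := fun j _ => W j) j' hj')
    refine Disjoint.mono_right h2 ?_
    refine (hW m).disjoint_sup_right_of_disjoint_sup_left ?_
    exact (hd.symm).mono_left (sup_le (le_iSup W m) (iSup₂_le fun j _ => le_iSup W j))

lemma hgcd_cons_sup {n : ℕ} (B : Submodule k V) (W : Fin n → Submodule k V) :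
    (⨆ i, Fin.cons B W i) = B ⊔ ⨆ i, W i := by
  apply le_antisymm
  · refine iSup_le fun i => ?_
    induction i using Fin.cases with
    | zero => rw [Fin.cons_zero]; exact le_sup_left
    | succ m => rw [Fin.cons_succ]; exact le_sup_of_le_right (le_iSup W m)
  · refine sup_le ?_ (iSup_le fun i => ?_)
    · simpa using le_iSup (Fin.cons B W) 0
    · simpa [Fin.cons_succ] using le_iSup (Fin.cons B W) i.succ

lemma hgcd_exists_dual (w : V) (hw : w ≠ 0) : ∃ g : V →ₗ[k] k, g w = 1 := by
  obtain ⟨g, hg⟩ := LinearMap.exists_extend ((LinearEquiv.coord k V w hw).toLinearMap)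
  refine ⟨g, ?_⟩
  have := LinearMap.congr_fun hg ⟨w, Submodule.mem_span_singleton_self w⟩
  simpa [LinearEquiv.coord_self] using this

end Aux

/-- Structure theory of `ℤ×ℤ/2`-graded ("half-graded") complexes with differential of
bidegree `(2, 1̄)` over a field `k`: every finite-dimensional such complex — a
finite-dimensional space `V` with an internal grading `Vg : ℤ × ZMod 2 → Submodule k V`
and a differential `d` with `d² = 0` mapping `Vg (a,b)` into `Vg (a+2, b+1)` —
decomposes as a direct sum of subcomplexes, each of which is either
(a) a line `span{v}` with `v` homogeneous and `d v = 0` (a single copy of `k` in some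
bidegree with zero differential), or
(b) a plane `span{v, d v}` with `v` homogeneous and `d v ≠ 0` (a two-term complex
`k⟨a⟩Π^b → k⟨a+2⟩Π^{b+1}` with differential a nonzero scalar).
(At the Grothendieck-group level this decomposition yields the ground ring
`ℤ[q,q⁻¹,π]/(π²−1, 1+q²π)`; only the structure theory is formalized here.) -/
theorem half_graded_complex_decomposition (k : Type*) [Field k]
    (V : Type*) [AddCommGroup V] [Module k V] [FiniteDimensional k V]
    (Vg : ℤ × ZMod 2 → Submodule k V)
    (hind : iSupIndep Vg) (hsup : iSup Vg = ⊤)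
    (d : V →ₗ[k] V) (hd2 : d ∘ₗ d = 0)
    (hdeg : ∀ p : ℤ × ZMod 2, ∀ v ∈ Vg p, d v ∈ Vg (p.1 + 2, p.2 + 1)) :
    ∃ (n : ℕ) (W : Fin n → Submodule k V),
      iSupIndep W ∧ iSup W = ⊤ ∧
      ∀ i, (∃ (p : ℤ × ZMod 2) (v : V), v ≠ 0 ∧ v ∈ Vg p ∧ d v = 0 ∧
              W i = Submodule.span k {v}) ∨
           (∃ (p : ℤ × ZMod 2) (v : V), v ∈ Vg p ∧ d v ≠ 0 ∧
              W i = Submodule.span k {v, d v}) := by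
  classical
  letI dec : DirectSum.Decomposition Vg :=
    ((DirectSum.isInternal_submodule_iff_iSupIndep_and_iSup_eq_top Vg).mpr
      ⟨hind, hsup⟩).chooseDecomposition
  have hdd : ∀ x : V, d (d x) = 0 := fun x => by
    simpa using LinearMap.congr_fun hd2 x
  have hshift : ∀ q q' : ℤ × ZMod 2,
      ((q.1 + 2 : ℤ), q.2 + 1) = ((q'.1 + 2 : ℤ), q'.2 + 1) → q = q' := by
    intro q q' h
    rw [Prod.ext_iff] at h ⊢
    obtain ⟨h1, h2⟩ := h
    exact ⟨by omega, by simpa using h2⟩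
  have hmem : ∀ (u : V) (q), (DirectSum.decompose Vg u q : V) ∈ Vg q :=
    fun u q => (DirectSum.decompose Vg u q).2
  have key : ∀ (ψ : V →ₗ[k] k) (q₀ : ℤ × ZMod 2),
      (∀ q, q ≠ q₀ → ∀ x ∈ Vg q, ψ x = 0) →
      ∀ u : V, ψ u = ψ (DirectSum.decompose Vg u q₀ : V) := by
    intro ψ q₀ h u
    conv_lhs => rw [← DirectSum.sum_support_decompose Vg u]
    rw [map_sum]
    refine Finset.sum_eq_single q₀ (fun b _ hb => h b hb _ (hmem u b)) ?_
    intro hq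
    rw [DFinsupp.notMem_support_iff.mp hq, ZeroMemClass.coe_zero, map_zero]
  have hex : ∀ U : Submodule k V, (∀ u ∈ U, ∀ q, (DirectSum.decompose Vg u q : V) ∈ U) →
      U ≠ ⊥ → ∃ (q : ℤ × ZMod 2) (v : V), v ∈ U ∧ v ∈ Vg q ∧ v ≠ 0 := by
    intro U hgr hU
    obtain ⟨u, huU, hune⟩ := Submodule.exists_mem_ne_zero_of_ne_bot hU
    by_contra hc
    push_neg at hc
    apply hune
    rw [← DirectSum.sum_support_decompose Vg u]
    refine Finset.sum_eq_zero fun q _ => ?_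
    exact hc q _ (hgr u huU q) (hmem u q)
  have hφ : ∀ (r : ℤ × ZMod 2) (w : V), w ∈ Vg r → w ≠ 0 →
      ∃ φ : V →ₗ[k] k, φ w = 1 ∧ ∀ q, q ≠ r → ∀ x ∈ Vg q, φ x = 0 := by
    intro r w hwr hw
    obtain ⟨g, hg⟩ := hgcd_exists_dual (k := k) w hw
    have hcompl : IsCompl (Vg r) (⨆ q, ⨆ (_ : q ≠ r), Vg q) := by
      refine ⟨hind r, ?_⟩
      rw [codisjoint_iff, ← hsup]
      refine le_antisymm (sup_le (le_iSup Vg r) (iSup₂_le fun q _ => le_iSup Vg q))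
        (iSup_le fun q => ?_)
      rcases eq_or_ne q r with rfl | hq
      · exact le_sup_left
      · exact le_sup_of_le_right (le_iSup₂ (f := fun q _ => Vg q) q hq)
    refine ⟨g ∘ₗ (Vg r).subtype ∘ₗ ((Vg r).projectionOnto _ hcompl), ?_, ?_⟩
    · have h1 := Submodule.linearProjOfIsCompl_apply_left hcompl ⟨w, hwr⟩
      simp only [LinearMap.comp_apply]
      rw [h1]
      simpa using hg
    · intro q hq x hx
      have hx' : x ∈ (⨆ q, ⨆ (_ : q ≠ r), Vg q) := le_iSup₂ (f := fun q _ => Vg q) q hq hx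
      simp [Submodule.projectionOnto_apply_of_mem_right hcompl hx']
  have main : ∀ (m : ℕ) (U : Submodule k V), Module.finrank k U = m →
      (∀ u ∈ U, ∀ q, (DirectSum.decompose Vg u q : V) ∈ U) → (∀ u ∈ U, d u ∈ U) →
      ∃ (n : ℕ) (W : Fin n → Submodule k V), iSupIndep W ∧ iSup W = U ∧
        ∀ i, (∃ (p : ℤ × ZMod 2) (v : V), v ≠ 0 ∧ v ∈ Vg p ∧ d v = 0 ∧
                W i = Submodule.span k {v}) ∨
             (∃ (p : ℤ × ZMod 2) (v : V), v ∈ Vg p ∧ d v ≠ 0 ∧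
                W i = Submodule.span k {v, d v}) := by
    intro m
    induction m using Nat.strong_induction_on with
    | _ m IH =>
    intro U hrank hgr hdU
    rcases eq_or_ne U ⊥ with rfl | hUne
    · exact ⟨0, fun i => i.elim0, fun i => i.elim0,
        le_antisymm (iSup_le fun i => i.elim0) bot_le, fun i => i.elim0⟩
    by_cases hcase : ∃ (p : ℤ × ZMod 2) (v : V), v ∈ U ∧ v ∈ Vg p ∧ d v ≠ 0
    · obtain ⟨p, v, hvU, hvp, hdv⟩ := hcase
      obtain ⟨φ, hφw, hφ0⟩ := hφ (p.1 + 2, p.2 + 1) (d v) (hdeg p v hvp) hdv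
      have hpne : p ≠ ((p.1 + 2 : ℤ), p.2 + 1) := by
        intro h
        rw [Prod.ext_iff] at h
        omega
      have hφv : φ v = 0 := hφ0 p hpne v hvp
      have hker : ∀ q, q ≠ p → ∀ x ∈ Vg q, (φ ∘ₗ d) x = 0 := by
        intro q hq x hx
        simp only [LinearMap.comp_apply]
        exact hφ0 _ (fun hh => hq (hshift q p hh)) _ (hdeg q x hx)
      set U' : Submodule k V := (U ⊓ LinearMap.ker φ) ⊓ LinearMap.ker (φ ∘ₗ d) with hU'def
      have hmemU' : ∀ x : V, x ∈ U' ↔ x ∈ U ∧ φ x = 0 ∧ φ (d x) = 0 := by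
        intro x
        simp [hU'def, Submodule.mem_inf, LinearMap.mem_ker, and_assoc]
      have hU'U : U' ≤ U := le_trans inf_le_left inf_le_left
      have hgr' : ∀ u ∈ U', ∀ q, (DirectSum.decompose Vg u q : V) ∈ U' := by
        intro u hu q
        obtain ⟨huU, huφ, huφd⟩ := (hmemU' u).mp hu
        refine (hmemU' _).mpr ⟨hgr u huU q, ?_, ?_⟩
        · rcases eq_or_ne q ((p.1 + 2 : ℤ), p.2 + 1) with rfl | hq
          · rw [← key φ _ hφ0 u]; exact huφ
          · exact hφ0 q hq _ (hmem u q)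
        · rcases eq_or_ne q p with rfl | hq
          · have h3 := key (φ ∘ₗ d) q hker u
            simp only [LinearMap.comp_apply] at h3
            rw [← h3]; exact huφd
          · exact hφ0 _ (fun hh => hq (hshift q p hh)) _ (hdeg q _ (hmem u q))
      have hdU' : ∀ u ∈ U', d u ∈ U' := by
        intro u hu
        obtain ⟨huU, huφ, huφd⟩ := (hmemU' u).mp hu
        exact (hmemU' _).mpr ⟨hdU u huU, huφd, by rw [hdd u, map_zero]⟩
      have hdisj : Disjoint (Submodule.span k {v, d v}) U' := by
        rw [disjoint_def]
        intro x hxB hxU'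
        obtain ⟨hxU, hxφ, hxφd⟩ := (hmemU' x).mp hxU'
        obtain ⟨a, b, rfl⟩ := Submodule.mem_span_pair.mp hxB
        have hb : b = 0 := by simpa [hφv, hφw] using hxφ
        have ha : a = 0 := by simpa [hdd, hφw] using hxφd
        simp [ha, hb]
      have hsum : Submodule.span k {v, d v} ⊔ U' = U := by
        apply le_antisymm
        · refine sup_le (Submodule.span_le.mpr ?_) hU'U
          simp only [Set.insert_subset_iff, Set.singleton_subset_iff, SetLike.mem_coe]
          exact ⟨hvU, hdU v hvU⟩
        · intro u hu
          have hmemB : φ (d u) • v + φ u • d v ∈ Submodule.span k {v, d v} :=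
            Submodule.mem_span_pair.mpr ⟨_, _, rfl⟩
          have hmemC : u - (φ (d u) • v + φ u • d v) ∈ U' := by
            refine (hmemU' _).mpr ⟨?_, ?_, ?_⟩
            · exact sub_mem hu (add_mem (smul_mem _ _ hvU) (smul_mem _ _ (hdU v hvU)))
            · simp [hφv, hφw]
            · simp [hdd, hφw]
          have h4 := Submodule.add_mem_sup hmemB hmemC
          simpa using h4
      have hvne' : v ∉ U' := by
        intro h
        have h5 := ((hmemU' v).mp h).2.2
        rw [hφw] at h5
        exact one_ne_zero h5
      have hlt : U' < U := lt_of_le_of_ne hU'U (fun h => hvne' (h.symm ▸ hvU))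
      obtain ⟨n, W, hWi, hWs, hWb⟩ := IH (Module.finrank k U')
        (hrank ▸ Submodule.finrank_lt_finrank_of_lt hlt) U' rfl hgr' hdU'
      refine ⟨n + 1, Fin.cons (Submodule.span k {v, d v}) W,
        hgcd_cons_indep _ _ hWi (hWs ▸ hdisj), ?_, ?_⟩
      · rw [hgcd_cons_sup, hWs, hsum]
      · intro i
        induction i using Fin.cases with
        | zero => exact Or.inr ⟨p, v, hvp, hdv, by rw [Fin.cons_zero]⟩
        | succ j => simpa [Fin.cons_succ] using hWb j
    · push_neg at hcase
      have hd0 : ∀ u ∈ U, d u = 0 := by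
        intro u hu
        rw [← DirectSum.sum_support_decompose Vg u, map_sum]
        refine Finset.sum_eq_zero fun q _ => ?_
        exact hcase q _ (hgr u hu q) (hmem u q)
      obtain ⟨p, v, hvU, hvp, hvne⟩ := hex U hgr hUne
      obtain ⟨φ, hφw, hφ0⟩ := hφ p v hvp hvne
      set U' : Submodule k V := U ⊓ LinearMap.ker φ with hU'def
      have hmemU' : ∀ x : V, x ∈ U' ↔ x ∈ U ∧ φ x = 0 := by
        intro x
        simp [hU'def, Submodule.mem_inf, LinearMap.mem_ker]
      have hU'U : U' ≤ U := inf_le_left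
      have hgr' : ∀ u ∈ U', ∀ q, (DirectSum.decompose Vg u q : V) ∈ U' := by
        intro u hu q
        obtain ⟨huU, huφ⟩ := (hmemU' u).mp hu
        refine (hmemU' _).mpr ⟨hgr u huU q, ?_⟩
        rcases eq_or_ne q p with rfl | hq
        · rw [← key φ _ hφ0 u]; exact huφ
        · exact hφ0 q hq _ (hmem u q)
      have hdU' : ∀ u ∈ U', d u ∈ U' := by
        intro u hu
        rw [hd0 u ((hmemU' u).mp hu).1]
        exact zero_mem _
      have hdisj : Disjoint (Submodule.span k {v}) U' := by
        rw [disjoint_def]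
        intro x hxB hxU'
        obtain ⟨a, rfl⟩ := Submodule.mem_span_singleton.mp hxB
        have ha : a = 0 := by simpa [hφw] using ((hmemU' _).mp hxU').2
        simp [ha]
      have hsum : Submodule.span k {v} ⊔ U' = U := by
        apply le_antisymm
        · exact sup_le (Submodule.span_le.mpr (by simpa using hvU)) hU'U
        · intro u hu
          have hmemB : φ u • v ∈ Submodule.span k {v} :=
            Submodule.mem_span_singleton.mpr ⟨_, rfl⟩
          have hmemC : u - φ u • v ∈ U' := by
            refine (hmemU' _).mpr ⟨sub_mem hu (smul_mem _ _ hvU), ?_⟩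
            simp [hφw]
          have h4 := Submodule.add_mem_sup hmemB hmemC
          simpa using h4
      have hvne' : v ∉ U' := by
        intro h
        have h5 := ((hmemU' v).mp h).2
        rw [hφw] at h5
        exact one_ne_zero h5
      have hlt : U' < U := lt_of_le_of_ne hU'U (fun h => hvne' (h.symm ▸ hvU))
      obtain ⟨n, W, hWi, hWs, hWb⟩ := IH (Module.finrank k U')
        (hrank ▸ Submodule.finrank_lt_finrank_of_lt hlt) U' rfl hgr' hdU'
      refine ⟨n + 1, Fin.cons (Submodule.span k {v}) W,
        hgcd_cons_indep _ _ hWi (hWs ▸ hdisj), ?_, ?_⟩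
      · rw [hgcd_cons_sup, hWs, hsum]
      · intro i
        induction i using Fin.cases with
        | zero => exact Or.inl ⟨p, v, hvne, hvp, hd0 v hvU, by rw [Fin.cons_zero]⟩
        | succ j => simpa [Fin.cons_succ] using hWb j
  obtain ⟨n, W, h1, h2, h3⟩ := main (Module.finrank k (⊤ : Submodule k V)) ⊤ rfl
    (fun u _ q => trivial) (fun u _ => trivial)
  exact ⟨n, W, h1, h2, h3⟩
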